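/- Let k be a field and H a finite-dimensional Hopf algebra over k whose antipode S is bijective. Let t ∈ H be a right integral (t·h = ε(h)·t for all h ∈ H), and let α : H → k be a left integral of the dual (∑ h₁·α(h₂) = α(h)·1_H for all h ∈ H) with α(t) = 1. Then for every k-linear endomorphism F of H, the trace of F equals ∑ α(t₂ · F(S(t₁))); more precisely, trace(F) is obtained by applying to Δ(t) the linear map H ⊗ H → k induced by the bilinear map (a, b) ↦ α(b · F(S(a))). -/

import Mathlib

open TensorProduct HopfAlgebra Coalgebra

open LinearMap

section helpers
variable {k H : Type*} [Field k] [Ring H] [HopfAlgebra k H]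

lemma repr_counit_left {a : H} (r : Repr k a (H × H)) :
    ∑ i ∈ r.index, counit (R := k) (r.left i) • r.right i = a := by
  have h : (TensorProduct.lid k H)
      (∑ i ∈ r.index, counit (R := k) (r.left i) ⊗ₜ[k] r.right i) = a := by
    rw [sum_counit_tmul_eq r]; simp
  simp only [map_sum, TensorProduct.lid_tmul] at h
  exact h

lemma repr_counit_right {a : H} (r : Repr k a (H × H)) :
    ∑ i ∈ r.index, counit (R := k) (r.right i) • r.left i = a := by
  have h : (TensorProduct.rid k H)
      (∑ i ∈ r.index, r.left i ⊗ₜ[k] counit (R := k) (r.right i)) = a := by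
    rw [sum_tmul_counit_eq r]; simp
  simp only [map_sum, TensorProduct.rid_tmul] at h
  exact h

lemma inner_claim {x y : H} (rx : Repr k x (H × H)) (ry : Repr k y (H × H)) :
    ∑ p ∈ rx.index, ∑ q ∈ ry.index,
      (rx.left p * ry.left q) * antipode (R := k) (rx.right p * ry.right q)
      = counit (R := k) (x * y) • (1 : H) := by
  have hcm : comul (R := k) (x * y)
      = ∑ p ∈ rx.index, ∑ q ∈ ry.index,
          (rx.left p * ry.left q) ⊗ₜ[k] (rx.right p * ry.right q) := by
    rw [Bialgebra.comul_mul, ← rx.eq, ← ry.eq, Finset.sum_mul_sum]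
    simp [Algebra.TensorProduct.tmul_mul_tmul]
  have h := mul_antipode_lTensor_comul_apply (R := k) (a := x * y)
  rw [hcm] at h
  simp only [map_sum, lTensor_tmul, LinearMap.mul'_apply] at h
  rw [h, Algebra.algebraMap_eq_smul_one]

lemma antipode_mul' (a b : H) :
    antipode (R := k) (A := H) (a * b)
      = antipode (R := k) (A := H) b * antipode (R := k) (A := H) a := by
  classical
  set S : H →ₗ[k] H := antipode (R := k) (A := H) with hSdef
  let ra := ℛ k a
  let rb := ℛ k b
  let ru : ∀ i, Repr k (ra.right i) (H × H) := fun i => ℛ k (ra.right i)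
  let rv : ∀ j, Repr k (rb.right j) (H × H) := fun j => ℛ k (rb.right j)
  let rw' : ∀ i, Repr k (ra.left i) (H × H) := fun i => ℛ k (ra.left i)
  let rz : ∀ j, Repr k (rb.left j) (H × H) := fun j => ℛ k (rb.left j)
  -- E in order j, q, i, p
  set E : H := ∑ j ∈ rb.index, ∑ q ∈ (rv j).index, ∑ i ∈ ra.index, ∑ p ∈ (ru i).index,
      S (rb.left j) * (S (ra.left i) *
        (((ru i).left p * (rv j).left q) * S ((ru i).right p * (rv j).right q))) with hE
  -- Claim 1 : S b * S a = E
  have claim1 : S b * S a = E := by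
    have hb : S b = ∑ j ∈ rb.index, counit (R := k) (rb.right j) • S (rb.left j) := by
      conv_lhs => rw [← repr_counit_right rb]
      simp [map_sum]
    have ha : S a = ∑ i ∈ ra.index, counit (R := k) (ra.right i) • S (ra.left i) := by
      conv_lhs => rw [← repr_counit_right ra]
      simp [map_sum]
    rw [hb, ha, Finset.sum_mul_sum, hE]
    refine Finset.sum_congr rfl fun j _ => ?_
    -- swap q and i, then q and p inside
    rw [Finset.sum_comm]
    refine Finset.sum_congr rfl fun i _ => ?_
    rw [Finset.sum_comm]
    -- now goal: (ε(b'ⱼ) • S bⱼ) * (ε(a'ᵢ) • S aᵢ) = ∑ p ∑ q Sbⱼ * (Saᵢ * (uv * S(u'v')))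
    have : ∑ p ∈ (ru i).index, ∑ q ∈ (rv j).index,
        S (rb.left j) * (S (ra.left i) *
          (((ru i).left p * (rv j).left q) * S ((ru i).right p * (rv j).right q)))
        = S (rb.left j) * (S (ra.left i) *
            (counit (R := k) (ra.right i * rb.right j) • (1 : H))) := by
      rw [← inner_claim (ru i) (rv j)]
      simp only [Finset.mul_sum, hSdef]
    rw [this]
    rw [Bialgebra.counit_mul]
    simp [smul_mul_assoc, smul_smul, mul_smul_comm, mul_comm]
  have claim2 : E = S (a * b) := by
    -- Step A : use coassociativity of `a`
    have hcoa := sum_tmul_tmul_eq ra rw' ru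
    have stepA : E = ∑ j ∈ rb.index, ∑ q ∈ (rv j).index,
        S (rb.left j) * ((rv j).left q * S (a * (rv j).right q)) := by
      rw [hE]
      refine Finset.sum_congr rfl fun j _ => Finset.sum_congr rfl fun q _ => ?_
      set L : H ⊗[k] (H ⊗[k] H) →ₗ[k] H :=
        mulLeft k (S (rb.left j)) ∘ₗ LinearMap.mul' k H ∘ₗ
          TensorProduct.map S (LinearMap.mul' k H ∘ₗ
            TensorProduct.map (mulRight k ((rv j).left q))
              (S ∘ₗ mulRight k ((rv j).right q))) with hL
      have happ := congrArg L hcoa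
      simp only [hL, map_sum, LinearMap.comp_apply, TensorProduct.map_tmul,
        LinearMap.mul'_apply, mulLeft_apply, mulRight_apply] at happ
      rw [← happ]
      -- collapse the p-sum
      have : ∀ i ∈ ra.index, (∑ p ∈ (rw' i).index,
          S (rb.left j) * (S ((rw' i).left p) * ((rw' i).right p * (rv j).left q *
            S (ra.right i * (rv j).right q))))
          = counit (R := k) (ra.left i) •
              (S (rb.left j) * ((rv j).left q * S (ra.right i * (rv j).right q))) := by
        intro i _
        have hp := sum_antipode_mul_eq_smul (R := k) (rw' i)
        calc ∑ p ∈ (rw' i).index,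
              S (rb.left j) * (S ((rw' i).left p) * ((rw' i).right p * (rv j).left q *
                S (ra.right i * (rv j).right q)))
            = S (rb.left j) * ((∑ p ∈ (rw' i).index, S ((rw' i).left p) * (rw' i).right p) *
                ((rv j).left q * S (ra.right i * (rv j).right q))) := by
              rw [Finset.sum_mul, Finset.mul_sum]
              exact Finset.sum_congr rfl fun p _ => by noncomm_ring
          _ = _ := by rw [hp]; simp [smul_mul_assoc, mul_smul_comm]
      rw [Finset.sum_congr rfl this]
      -- now use the counit identity on a
      set P : H →ₗ[k] H :=
        mulLeft k (S (rb.left j)) ∘ₗ mulLeft k ((rv j).left q) ∘ₗ S ∘ₗ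
          mulRight k ((rv j).right q) with hP
      have : ∑ i ∈ ra.index, counit (R := k) (ra.left i) •
          (S (rb.left j) * ((rv j).left q * S (ra.right i * (rv j).right q)))
          = P (∑ i ∈ ra.index, counit (R := k) (ra.left i) • ra.right i) := by
        rw [map_sum]
        exact Finset.sum_congr rfl fun i _ => by
          rw [map_smul]; simp [hP]
      rw [this, repr_counit_left ra]
      simp [hP]
    -- Step B : use coassociativity of `b`
    have hcob := sum_tmul_tmul_eq rb rz rv
    set N : H ⊗[k] (H ⊗[k] H) →ₗ[k] H :=
      LinearMap.mul' k H ∘ₗ TensorProduct.map S (LinearMap.mul' k H ∘ₗ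
        TensorProduct.map LinearMap.id (S ∘ₗ mulLeft k a)) with hN
    have happ := congrArg N hcob
    simp only [hN, map_sum, LinearMap.comp_apply, TensorProduct.map_tmul,
      LinearMap.mul'_apply, mulLeft_apply, LinearMap.id_apply] at happ
    rw [stepA, ← happ]
    have : ∀ j ∈ rb.index, (∑ q ∈ (rz j).index,
        S ((rz j).left q) * ((rz j).right q * S (a * rb.right j)))
        = counit (R := k) (rb.left j) • S (a * rb.right j) := by
      intro j _
      have hq := sum_antipode_mul_eq_smul (R := k) (rz j)
      calc ∑ q ∈ (rz j).index, S ((rz j).left q) * ((rz j).right q * S (a * rb.right j))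
          = (∑ q ∈ (rz j).index, S ((rz j).left q) * (rz j).right q) * S (a * rb.right j) := by
            rw [Finset.sum_mul]
            exact Finset.sum_congr rfl fun q _ => by rw [mul_assoc]
        _ = _ := by rw [hq]; simp [smul_mul_assoc]
    rw [Finset.sum_congr rfl this]
    have : ∑ j ∈ rb.index, counit (R := k) (rb.left j) • S (a * rb.right j)
        = (S ∘ₗ mulLeft k a) (∑ j ∈ rb.index, counit (R := k) (rb.left j) • rb.right j) := by
      rw [map_sum]
      exact Finset.sum_congr rfl fun j _ => by rw [map_smul]; simp
    rw [this, repr_counit_left rb]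
    simp
  rw [claim1, claim2]

lemma antipode_one' : antipode (R := k) (A := H) 1 = 1 := by
  have h := mul_antipode_rTensor_comul_apply (R := k) (a := (1 : H))
  simpa [Algebra.TensorProduct.one_def] using h

lemma claimC (h : H) (r : Repr k h (H × H)) :
    ∑ i ∈ r.index, comul (R := k) (r.left i) *
      ((1 : H) ⊗ₜ[k] antipode (R := k) (A := H) (r.right i)) = h ⊗ₜ[k] (1 : H) := by
  classical
  set S : H →ₗ[k] H := antipode (R := k) (A := H) with hSdef
  let rl : ∀ i, Repr k (r.left i) (H × H) := fun i => ℛ k (r.left i)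
  let rr : ∀ i, Repr k (r.right i) (H × H) := fun i => ℛ k (r.right i)
  have hco := sum_tmul_tmul_eq r rl rr
  set L : H ⊗[k] (H ⊗[k] H) →ₗ[k] H ⊗[k] H :=
    lTensor H (LinearMap.mul' k H ∘ₗ TensorProduct.map LinearMap.id S) with hL
  have happ := congrArg L hco
  simp only [hL, map_sum, lTensor_tmul, LinearMap.comp_apply, TensorProduct.map_tmul,
    LinearMap.mul'_apply, LinearMap.id_apply] at happ
  -- LHS of goal equals left side of happ
  have hleft : ∑ i ∈ r.index, comul (R := k) (r.left i) *
      ((1 : H) ⊗ₜ[k] S (r.right i))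
      = ∑ i ∈ r.index, ∑ p ∈ (rl i).index,
        (rl i).left p ⊗ₜ[k] ((rl i).right p * S (r.right i)) := by
    refine Finset.sum_congr rfl fun i _ => ?_
    rw [← (rl i).eq, Finset.sum_mul]
    exact Finset.sum_congr rfl fun p _ => by
      rw [Algebra.TensorProduct.tmul_mul_tmul, mul_one]
  rw [hleft, happ]
  -- collapse using the antipode axiom and the counit identity
  have : ∀ i ∈ r.index, (∑ p ∈ (rr i).index,
      r.left i ⊗ₜ[k] ((rr i).left p * S ((rr i).right p)))
      = counit (R := k) (r.right i) • (r.left i ⊗ₜ[k] (1 : H)) := by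
    intro i _
    rw [← TensorProduct.tmul_sum, sum_mul_antipode_eq_smul (R := k) (rr i),
      TensorProduct.tmul_smul]
  rw [Finset.sum_congr rfl this]
  have : ∑ i ∈ r.index, counit (R := k) (r.right i) • (r.left i ⊗ₜ[k] (1 : H))
      = (∑ i ∈ r.index, counit (R := k) (r.right i) • r.left i) ⊗ₜ[k] (1 : H) := by
    rw [TensorProduct.sum_tmul]
    exact Finset.sum_congr rfl fun i _ => by rw [TensorProduct.smul_tmul']
  rw [this, repr_counit_right r]

lemma stepB (t : H) (ht : ∀ h : H, t * h = counit (R := k) h • t) (h : H) :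
    comul (R := k) t * ((1 : H) ⊗ₜ[k] antipode (R := k) (A := H) h)
      = comul (R := k) t * (h ⊗ₜ[k] (1 : H)) := by
  classical
  set S : H →ₗ[k] H := antipode (R := k) (A := H) with hSdef
  have hint : ∀ x : H, counit (R := k) x • comul (R := k) t
      = comul (R := k) t * comul (R := k) x := by
    intro x
    rw [← Bialgebra.comul_mul, ht x, map_smul]
  let r := ℛ k h
  have h1 : (1 : H) ⊗ₜ[k] S h
      = ∑ i ∈ r.index, counit (R := k) (r.left i) • ((1 : H) ⊗ₜ[k] S (r.right i)) := by
    conv_lhs => rw [← repr_counit_left r]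
    rw [map_sum]
    simp [TensorProduct.tmul_sum, TensorProduct.tmul_smul]
  rw [h1, Finset.mul_sum]
  have h2 : ∀ i ∈ r.index,
      comul (R := k) t * (counit (R := k) (r.left i) • ((1 : H) ⊗ₜ[k] S (r.right i)))
      = comul (R := k) t * (comul (R := k) (r.left i) * ((1 : H) ⊗ₜ[k] S (r.right i))) := by
    intro i _
    rw [mul_smul_comm, ← smul_mul_assoc, hint, mul_assoc]
  rw [Finset.sum_congr rfl h2, ← Finset.mul_sum, claimC h r]

end helpers



/-- **Trace formula via integrals: `tr(F) = ∑ α(t₂ · F(S(t₁)))`.** Let `H` be a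
finite-dimensional Hopf algebra over a field `k` with bijective antipode `S`, `t ∈ H` a
right integral (`t * h = ε(h) • t`), and `α : H → k` a left integral of the dual
(`∑ h₁ · α(h₂) = α(h) • 1`) with `α t = 1`.  Then for every `k`-linear endomorphism `F`
of `H`, the trace of `F` is obtained by applying to `Δ t` the linear map `H ⊗ H → k`
induced by the bilinear map `(a, b) ↦ α (b * F (S a))`. -/
theorem stmt12 {k H : Type*} [Field k] [Ring H] [HopfAlgebra k H]
    [FiniteDimensional k H]
    (hS : Function.Bijective (antipode (R := k) (A := H)))
    (t : H) (ht : ∀ h : H, t * h = counit (R := k) h • t)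
    (α : H →ₗ[k] k)
    (hα : ∀ h : H,
      TensorProduct.rid k H ((LinearMap.lTensor H α) (comul (R := k) h)) = α h • (1 : H))
    (hαt : α t = 1) :
    ∀ F : H →ₗ[k] H,
      LinearMap.trace k H F =
        α ((LinearMap.mul' k H) ((TensorProduct.comm k H H)
          ((TensorProduct.map (F ∘ₗ antipode (R := k)) LinearMap.id)
            (comul (R := k) t)))) := by
  intro F
  classical
  set S : H →ₗ[k] H := antipode (R := k) (A := H) with hSdef
  set Λ : H ⊗[k] H →ₗ[k] H :=
    S ∘ₗ (TensorProduct.rid k H).toLinearMap ∘ₗ LinearMap.lTensor H α with hΛ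
  have lam_tmul : ∀ x y : H, Λ (x ⊗ₜ[k] y) = α y • S x := by
    intro x y; simp [hΛ, TensorProduct.rid_tmul]
  have lam_mul : ∀ (z : H ⊗[k] H) (g : H), Λ (z * (g ⊗ₜ[k] (1 : H))) = S g * Λ z := by
    intro z g
    induction z using TensorProduct.induction_on with
    | zero => simp
    | tmul x y =>
        rw [Algebra.TensorProduct.tmul_mul_tmul, mul_one, lam_tmul, lam_tmul]
        rw [antipode_mul', mul_smul_comm]
    | add u v hu hv => rw [add_mul, map_add, hu, hv, map_add, mul_add]
  have lam_comul_t : Λ (comul (R := k) t) = 1 := by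
    rw [hΛ]
    simp only [LinearMap.comp_apply, LinearEquiv.coe_coe]
    rw [hα t, map_smul, hαt, antipode_one', one_smul]
  have star : ∀ h : H, Λ (comul (R := k) t * ((1 : H) ⊗ₜ[k] h)) = h := by
    intro h
    obtain ⟨g, hg⟩ := hS.2 h
    rw [← hg, stepB t ht, lam_mul, lam_comul_t, mul_one]
  -- the map β
  set φ : H →ₗ[k] Module.Dual k H :=
    LinearMap.llcomp k H H k α ∘ₗ LinearMap.mul k H with hφ
  set β : H ⊗[k] H →ₗ[k] H →ₗ[k] H :=
    dualTensorHom k H H ∘ₗ TensorProduct.map φ S ∘ₗ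
      (TensorProduct.comm k H H).toLinearMap with hβ
  have hβt : ∀ x y : H, β (x ⊗ₜ[k] y) = dualTensorHom k H H (φ y ⊗ₜ[k] S x) := by
    intro x y; simp [hβ]
  have hβid : β (comul (R := k) t) = LinearMap.id := by
    apply LinearMap.ext; intro h
    have h1 : ∀ z : H ⊗[k] H, β z h = Λ (z * ((1 : H) ⊗ₜ[k] h)) := by
      intro z
      induction z using TensorProduct.induction_on with
      | zero => simp
      | tmul x y =>
          rw [hβt, Algebra.TensorProduct.tmul_mul_tmul, mul_one, lam_tmul]
          simp [hφ, dualTensorHom_apply]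
      | add u v hu hv => rw [map_add, add_mul, map_add, LinearMap.add_apply, hu, hv]
    rw [h1, star]; rfl
  have h2 : ∀ z : H ⊗[k] H,
      LinearMap.trace k H (β z ∘ₗ F) =
        α ((LinearMap.mul' k H) ((TensorProduct.comm k H H)
          ((TensorProduct.map (F ∘ₗ S) LinearMap.id) z))) := by
    intro z
    induction z using TensorProduct.induction_on with
    | zero => simp
    | tmul x y =>
        have : β (x ⊗ₜ[k] y) ∘ₗ F = dualTensorHom k H H ((φ y ∘ₗ F) ⊗ₜ[k] S x) := by
          apply LinearMap.ext; intro w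
          rw [hβt]
          simp [dualTensorHom_apply]
        rw [this, LinearMap.trace_eq_contract_apply, contractLeft_apply]
        simp [hφ]
    | add u v hu hv =>
        rw [map_add, LinearMap.add_comp, map_add, hu, hv]
        simp only [map_add]
  calc LinearMap.trace k H F = LinearMap.trace k H (β (comul (R := k) t) ∘ₗ F) := by
        rw [hβid, LinearMap.id_comp]
    _ = _ := h2 (comul (R := k) t)
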